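/- For s ∈ (0,1), the function w_{0,s}(x₁,x₂) = (√(x₁²+x₂²)+x₁)^s satisfies ∂₁(x₂^{1−2s} ∂₁ w_{0,s}) + ∂₂(x₂^{1−2s} ∂₂ w_{0,s}) = 0 at every point of the open upper half-plane {x₂ > 0}. -/

import Mathlib

open Real

/-- The `s`-homogeneous model function `w_{0,s}`. -/
noncomputable def w0 (s x₁ x₂ : ℝ) : ℝ :=
  (Real.sqrt (x₁ ^ 2 + x₂ ^ 2) + x₁) ^ s

lemma sqrt_add_pos {a b : ℝ} (hb : b ≠ 0) : 0 < Real.sqrt (a ^ 2 + b ^ 2) + a := by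
  have h1 : |a| < Real.sqrt (a ^ 2 + b ^ 2) := by
    rw [← Real.sqrt_sq_eq_abs]
    apply Real.sqrt_lt_sqrt (by positivity)
    nlinarith [pow_pos (abs_pos.mpr hb) 2, sq_abs b]
  have := neg_abs_le a
  linarith

lemma sqrt_pos' {a b : ℝ} (hb : b ≠ 0) : 0 < Real.sqrt (a ^ 2 + b ^ 2) :=
  Real.sqrt_pos.mpr (by positivity)

lemma hasDerivAt_sqrt1 (b : ℝ) (t : ℝ) (h0 : t ^ 2 + b ^ 2 ≠ 0) :
    HasDerivAt (fun a => Real.sqrt (a ^ 2 + b ^ 2)) (t / Real.sqrt (t ^ 2 + b ^ 2)) t := by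
  have hf : HasDerivAt (fun a : ℝ => a ^ 2 + b ^ 2) (2 * t) t := by
    simpa using (hasDerivAt_pow 2 t).add_const (b ^ 2)
  have hs : Real.sqrt (t ^ 2 + b ^ 2) ≠ 0 := by
    simpa [Real.sqrt_eq_zero'] using lt_of_le_of_ne (by positivity) (Ne.symm h0)
  convert hf.sqrt h0 using 1
  field_simp

lemma hasDerivAt_sqrt2 (a : ℝ) (t : ℝ) (h0 : a ^ 2 + t ^ 2 ≠ 0) :
    HasDerivAt (fun b => Real.sqrt (a ^ 2 + b ^ 2)) (t / Real.sqrt (a ^ 2 + t ^ 2)) t := by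
  have hf : HasDerivAt (fun b : ℝ => a ^ 2 + b ^ 2) (2 * t) t := by
    simpa using ((hasDerivAt_pow 2 t).const_add (a ^ 2))
  have hs : Real.sqrt (a ^ 2 + t ^ 2) ≠ 0 := by
    simpa [Real.sqrt_eq_zero'] using lt_of_le_of_ne (by positivity) (Ne.symm h0)
  convert hf.sqrt h0 using 1
  field_simp

lemma d1 (s b : ℝ) (hb : b ≠ 0) (t : ℝ) :
    HasDerivAt (fun a => w0 s a b)
      (s * (Real.sqrt (t ^ 2 + b ^ 2) + t) ^ s / Real.sqrt (t ^ 2 + b ^ 2)) t := by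
  have h0 : t ^ 2 + b ^ 2 ≠ 0 := by positivity
  have hr := (hasDerivAt_sqrt1 b t h0).add (hasDerivAt_id t)
  have hp : (0:ℝ) < Real.sqrt (t ^ 2 + b ^ 2) + t := sqrt_add_pos hb
  have hrp : (0:ℝ) < Real.sqrt (t ^ 2 + b ^ 2) := sqrt_pos' hb
  have := hr.rpow_const (p := s) (Or.inl hp.ne')
  convert this using 1
  · rfl
  simp only [Pi.add_apply, id]
  rw [Real.rpow_sub hp, Real.rpow_one]
  field_simp
  ring

lemma d2 (s a : ℝ) (t : ℝ) (ht : t ≠ 0) :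
    HasDerivAt (fun b => w0 s a b)
      (s * (Real.sqrt (a ^ 2 + t ^ 2) + a) ^ (s - 1) * t / Real.sqrt (a ^ 2 + t ^ 2)) t := by
  have h0 : a ^ 2 + t ^ 2 ≠ 0 := by positivity
  have hr := (hasDerivAt_sqrt2 a t h0).add_const a
  have hp : (0:ℝ) < Real.sqrt (a ^ 2 + t ^ 2) + a := sqrt_add_pos ht
  have := hr.rpow_const (p := s) (Or.inl hp.ne')
  convert this using 1
  · funext y; unfold w0; rw [add_comm]
  · ring

/-- `w_{0,s}` solves `∂₁(x₂^{1-2s} ∂₁ w) + ∂₂(x₂^{1-2s} ∂₂ w) = 0` in the open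
upper half-plane. -/
theorem stmt2 (s : ℝ) (hs : s ∈ Set.Ioo (0 : ℝ) 1) (x₁ x₂ : ℝ) (hx₂ : 0 < x₂) :
    deriv (fun t => x₂ ^ (1 - 2 * s) * deriv (fun a => w0 s a x₂) t) x₁
      + deriv (fun t => t ^ (1 - 2 * s) * deriv (fun b => w0 s x₁ b) t) x₂ = 0 := by
  have hb : x₂ ≠ 0 := hx₂.ne'
  have h0 : x₁ ^ 2 + x₂ ^ 2 ≠ 0 := by positivity
  -- Part 1
  have heq1 : (fun t => x₂ ^ (1 - 2*s) * deriv (fun a => w0 s a x₂) t)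
      = (fun t => x₂ ^ (1 - 2*s) * s * w0 s t x₂ / Real.sqrt (t ^ 2 + x₂ ^ 2)) := by
    funext t; rw [(d1 s x₂ hb t).deriv]; unfold w0; ring
  have hF := ((d1 s x₂ hb x₁).const_mul (x₂ ^ (1 - 2*s) * s)).div
      (hasDerivAt_sqrt1 x₂ x₁ h0) (sqrt_pos' hb).ne'
  -- Part 2
  have hev : (fun t => t ^ (1 - 2*s) * deriv (fun b => w0 s x₁ b) t)
      =ᶠ[nhds x₂] (fun t => t ^ (1 - 2*s) *
        (s * (Real.sqrt (x₁ ^ 2 + t ^ 2) + x₁) ^ (s-1) * t / Real.sqrt (x₁ ^ 2 + t ^ 2))) := by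
    filter_upwards [Ioi_mem_nhds hx₂] with t ht
    rw [(d2 s x₁ t (ne_of_gt ht)).deriv]
  have hA := ((hasDerivAt_sqrt2 x₁ x₂ h0).add_const x₁).rpow_const
      (p := s - 1) (Or.inl (sqrt_add_pos hb).ne')
  have hnum2 := (hA.const_mul s).mul (hasDerivAt_id x₂)
  have hfrac := hnum2.div (hasDerivAt_sqrt2 x₁ x₂ h0) (sqrt_pos' hb).ne'
  have hG := (Real.hasDerivAt_rpow_const (x := x₂) (p := 1 - 2*s) (Or.inl hb)).mul hfrac
  simp only [id] at hG
  simp only [Pi.div_def, Pi.mul_def, id] at hF hG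
  rw [heq1, hF.deriv, (Filter.EventuallyEq.deriv_eq hev), hG.deriv]
  -- algebra
  set r := Real.sqrt (x₁ ^ 2 + x₂ ^ 2) with hrdef
  have hr2 : r ^ 2 = x₁ ^ 2 + x₂ ^ 2 := Real.sq_sqrt (by positivity)
  have hrpos : 0 < r := sqrt_pos' hb
  have hp : (0:ℝ) < r + x₁ := sqrt_add_pos hb
  unfold w0
  rw [show s - 1 - 1 = s - 2 by ring]
  have key : ∀ (p : ℝ), 0 < p → ∀ u : ℝ, p ^ (u + 1) = p ^ u * p := by
    intro p hp u; rw [Real.rpow_add hp, Real.rpow_one]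
  have e1 : (r + x₁) ^ (s-1) = (r + x₁) ^ (s-2) * (r + x₁) := by
    rw [← key _ hp (s-2)]; congr 1; ring
  have e2 : (r + x₁) ^ s = (r + x₁) ^ (s-2) * (r + x₁) * (r + x₁) := by
    rw [← key _ hp, ← key _ hp]; congr 1; ring
  have e3 : x₂ ^ (1 - 2*s) = x₂ ^ (1 - 2*s - 1) * x₂ := by
    rw [← key _ hx₂ (1 - 2*s - 1)]; congr 1; ring
  rw [e1, e2, e3]
  field_simp
  ring_nf
  linear_combination (s * x₂ ^ (-(s*2)) * x₂ * (r+x₁) ^ (-2+s) *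
    (2*r + x₁ - s*r)) * hr2
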